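/- For a > 0 (or more generally when the integral converges, requiring b, c > 0), ∫₀^∞ u^{a−1} exp(−b/u − c·u) du = 2(b/c)^{a/2} · K_a(2√(bc)), where K_a is the modified Bessel function of the second kind of order a. -/

import Mathlib

open Real MeasureTheory

/-- The modified Bessel function of the second kind `K_a(x)` (for `x > 0`),
given by its standard integral representation
`K_a(x) = ∫₀^∞ exp(−x cosh t) cosh(a t) dt`. -/
noncomputable def besselK (a x : ℝ) : ℝ :=
  ∫ t in Set.Ioi (0 : ℝ), Real.exp (-x * Real.cosh t) * Real.cosh (a * t)

lemma sq_div_four_le_cosh (t : ℝ) : t ^ 2 / 4 ≤ Real.cosh t := by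
  have h := Real.quadratic_le_exp_of_nonneg (abs_nonneg t)
  have h2 : Real.exp |t| ≤ 2 * Real.cosh t := by
    rw [Real.cosh_eq]
    rcases abs_cases t with ⟨h1, _⟩ | ⟨h1, _⟩ <;> rw [h1] <;>
      nlinarith [Real.exp_pos t, Real.exp_pos (-t)]
  nlinarith [sq_abs t, abs_nonneg t]

lemma integrable_aux (a : ℝ) {x : ℝ} (hx : 0 < x) :
    Integrable (fun t : ℝ => Real.exp (-x * Real.cosh t) * Real.exp (a * t)) := by
  have hInt : Integrable (fun t : ℝ =>
      Real.exp (a ^ 2 / x) * Real.exp (-(x / 4) * (t - 2 * a / x) ^ 2)) :=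
    ((integrable_exp_neg_mul_sq (by positivity : (0:ℝ) < x / 4)).comp_sub_right
      (2 * a / x)).const_mul _
  refine hInt.mono ?_ ?_
  · exact (Continuous.mul (by continuity) (by continuity)).aestronglyMeasurable
  · filter_upwards with t
    rw [Real.norm_eq_abs, Real.norm_eq_abs, abs_of_pos (by positivity),
      abs_of_pos (by positivity), ← Real.exp_add, ← Real.exp_add]
    apply Real.exp_le_exp.2
    have h1 : (x / 4) * t ^ 2 ≤ x * Real.cosh t := by
      have := sq_div_four_le_cosh t
      nlinarith
    have h2 : a ^ 2 / x + -(x / 4) * (t - 2 * a / x) ^ 2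
        = a * t - (x / 4) * t ^ 2 := by field_simp; ring
    rw [h2]
    linarith

lemma integral_real_eq (a : ℝ) {x : ℝ} (hx : 0 < x) :
    (∫ t : ℝ, Real.exp (-x * Real.cosh t) * Real.exp (a * t)) = 2 * besselK a x := by
  have hI := integrable_aux a hx
  have hI' := integrable_aux (-a) hx
  rw [← intervalIntegral.integral_Iic_add_Ioi (b := 0) hI.integrableOn hI.integrableOn]
  have h1 : (∫ t in Set.Iic (0:ℝ), Real.exp (-x * Real.cosh t) * Real.exp (a * t))
      = ∫ t in Set.Ioi (0:ℝ), Real.exp (-x * Real.cosh t) * Real.exp (-a * t) := by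
    have h0 := integral_comp_neg_Ioi (0:ℝ)
      (fun t => Real.exp (-x * Real.cosh t) * Real.exp (a * t))
    simp only [neg_zero] at h0
    rw [← h0]
    refine setIntegral_congr_fun measurableSet_Ioi fun t _ => ?_
    rw [Real.cosh_neg]
    ring_nf
  rw [h1]
  have h2 : (2 : ℝ) * besselK a x
      = ∫ t in Set.Ioi (0:ℝ),
          (Real.exp (-x * Real.cosh t) * Real.exp (-a * t)
            + Real.exp (-x * Real.cosh t) * Real.exp (a * t)) := by
    rw [besselK, ← integral_const_mul]
    refine setIntegral_congr_fun measurableSet_Ioi fun t _ => ?_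
    rw [Real.cosh_eq (a*t)]
    ring_nf
  rw [h2, integral_add hI'.integrableOn hI.integrableOn]

/-- For b, c > 0,
∫₀^∞ u^{a−1} exp(−b/u − c·u) du = 2(b/c)^{a/2}·K_a(2√(bc)),
the normalization constant of the GIG distribution. -/
theorem gig_normalization (a b c : ℝ) (hb : 0 < b) (hc : 0 < c) :
    ∫ u in Set.Ioi (0 : ℝ), u ^ (a - 1) * Real.exp (-b / u - c * u)
      = 2 * (b / c) ^ (a / 2) * besselK a (2 * Real.sqrt (b * c)) := by
  have hbc : (0:ℝ) < b / c := div_pos hb hc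
  set m : ℝ := Real.sqrt (b / c) with hm_def
  have hm : 0 < m := Real.sqrt_pos.2 hbc
  set x : ℝ := 2 * Real.sqrt (b * c) with hx_def
  have hx : 0 < x := by positivity
  have himg : (fun t : ℝ => m * Real.exp t) '' Set.univ = Set.Ioi 0 := by
    ext y
    simp only [Set.image_univ, Set.mem_range, Set.mem_Ioi]
    constructor
    · rintro ⟨t, rfl⟩; positivity
    · intro hy
      exact ⟨Real.log (y / m), by rw [Real.exp_log (div_pos hy hm)]; field_simp⟩
  have hderiv : ∀ t ∈ (Set.univ : Set ℝ),
      HasDerivWithinAt (fun t : ℝ => m * Real.exp t) (m * Real.exp t) Set.univ t :=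
    fun t _ => ((Real.hasDerivAt_exp t).const_mul m).hasDerivWithinAt
  have hinj : Set.InjOn (fun t : ℝ => m * Real.exp t) Set.univ :=
    ((mul_right_injective₀ hm.ne').comp Real.exp_injective).injOn
  have hsub := integral_image_eq_integral_abs_deriv_smul MeasurableSet.univ hderiv hinj
    (fun u => u ^ (a - 1) * Real.exp (-b / u - c * u))
  rw [himg] at hsub
  rw [hsub, Measure.restrict_univ]
  have hpt : ∀ t : ℝ, |m * Real.exp t| • ((m * Real.exp t) ^ (a - 1) *
      Real.exp (-b / (m * Real.exp t) - c * (m * Real.exp t)))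
      = (b / c) ^ (a / 2) * (Real.exp (-x * Real.cosh t) * Real.exp (a * t)) := by
    intro t
    have he : (0:ℝ) < Real.exp t := Real.exp_pos t
    have hsb : Real.sqrt b * Real.sqrt b = b := Real.mul_self_sqrt hb.le
    have hsc : Real.sqrt c * Real.sqrt c = c := Real.mul_self_sqrt hc.le
    have h1 : (0:ℝ) < Real.sqrt b := Real.sqrt_pos.2 hb
    have h2 : (0:ℝ) < Real.sqrt c := Real.sqrt_pos.2 hc
    have hq1 : b / m = Real.sqrt (b * c) := by
      rw [hm_def, Real.sqrt_div hb.le, Real.sqrt_mul hb.le]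
      field_simp
      linear_combination (-1 : ℝ) * hsb
    have hq2 : c * m = Real.sqrt (b * c) := by
      rw [hm_def, Real.sqrt_div hb.le, Real.sqrt_mul hb.le]
      field_simp
      linear_combination (-1 : ℝ) * hsc
    have harg : -b / (m * Real.exp t) - c * (m * Real.exp t) = -x * Real.cosh t := by
      calc -b / (m * Real.exp t) - c * (m * Real.exp t)
          = -((b / m) * (Real.exp t)⁻¹) - (c * m) * Real.exp t := by
            field_simp
            try ring
        _ = -(2 * Real.sqrt (b * c)) * ((Real.exp t + Real.exp (-t)) / 2) := by
            rw [hq1, hq2, Real.exp_neg]; ring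
        _ = -x * Real.cosh t := by rw [Real.cosh_eq, hx_def]
    have e1 : (m * Real.exp t) ^ (a - 1) = m ^ (a - 1) * Real.exp (t * (a - 1)) := by
      rw [Real.mul_rpow hm.le he.le, ← Real.exp_mul]
    have e2 : m * m ^ (a - 1) = (b / c) ^ (a / 2) := by
      have key : (1:ℝ)/2 + 1/2 * (a - 1) = a / 2 := by ring
      calc m * m ^ (a - 1)
          = (b/c) ^ ((1:ℝ)/2) * (b/c) ^ ((1:ℝ)/2 * (a - 1)) := by
            rw [hm_def, Real.sqrt_eq_rpow, ← Real.rpow_mul hbc.le]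
        _ = (b/c) ^ ((1:ℝ)/2 + 1/2 * (a - 1)) := (Real.rpow_add hbc _ _).symm
        _ = (b/c) ^ (a / 2) := by rw [key]
    have e3 : Real.exp t * Real.exp (t * (a - 1)) = Real.exp (a * t) := by
      rw [← Real.exp_add]; ring_nf
    rw [harg, smul_eq_mul, abs_of_pos (by positivity), e1]
    calc m * Real.exp t * (m ^ (a-1) * Real.exp (t * (a-1)) * Real.exp (-x * Real.cosh t))
        = (m * m ^ (a-1)) * ((Real.exp t * Real.exp (t * (a-1))) * Real.exp (-x * Real.cosh t)) := by
          ring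
      _ = (b / c) ^ (a / 2) * (Real.exp (-x * Real.cosh t) * Real.exp (a * t)) := by
          rw [e2, e3]; ring
  simp_rw [hpt]
  rw [integral_const_mul, integral_real_eq a hx]
  ring
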